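/- Let φ be a skew-morphism of a finite group A of order n with power function π, and let Core φ = ∩_{i=1}^{n} φ^i(Ker φ). For x ∈ A, the following are equivalent: (i) φ(x) ≡ x (mod Core φ), i.e. φ(x)x^{-1} ∈ Core φ; (ii) π(φ^i(x)) = π(x) for all nonnegative integers i; (iii) the image of x in A/Core φ is fixed by the induced skew-morphism on A/Core φ. -/

import Mathlib

/-- A skew-morphism of a group `A`: a permutation `φ` fixing the identity together with
a power function `pi` (a natural-number representative of the `ℤ_n`-valued power function,
`n = orderOf φ`) such that `φ (x * y) = φ x * φ ^ (pi x) y`. -/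
structure SkewMorphism (A : Type*) [Group A] where
  toPerm : Equiv.Perm A
  pi : A → ℕ
  map_one' : toPerm 1 = 1
  skew : ∀ x y : A, toPerm (x * y) = toPerm x * (toPerm ^ pi x) y

/-- The kernel of a skew-morphism: elements where the power function is `1` in `ℤ_n`. -/
def SkewMorphism.ker {A : Type*} [Group A] (S : SkewMorphism A) : Set A :=
  {x : A | S.pi x ≡ 1 [MOD orderOf S.toPerm]}

/-- The core of a skew-morphism: `⋂_{i=1}^{n} φ^i (Ker φ)`. -/
def SkewMorphism.core {A : Type*} [Group A] (S : SkewMorphism A) : Set A :=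
  ⋂ i ∈ Finset.Icc 1 (orderOf S.toPerm), (S.toPerm ^ i) '' S.ker

namespace SkewMorphism

set_option linter.unusedSectionVars false

variable {A : Type*} [Group A] [Fintype A] (S : SkewMorphism A)

/-- `σ_k(x) = ∑_{i<k} π(φ^i x)`. -/
def sig (k : ℕ) (x : A) : ℕ := ∑ i ∈ Finset.range k, S.pi ((S.toPerm ^ i) x)

lemma sig_zero (x : A) : S.sig 0 x = 0 := by simp [sig]

lemma sig_succ (k : ℕ) (x : A) :
    S.sig (k + 1) x = S.sig k x + S.pi ((S.toPerm ^ k) x) :=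
  Finset.sum_range_succ _ k

lemma pow_apply_mul_pow_apply (k m : ℕ) (x : A) :
    (S.toPerm ^ k) ((S.toPerm ^ m) x) = (S.toPerm ^ (m + k)) x := by
  rw [add_comm, pow_add, Equiv.Perm.mul_apply]

lemma sig_succ' (k : ℕ) (x : A) :
    S.sig (k + 1) x = S.pi x + S.sig k (S.toPerm x) := by
  rw [sig, Finset.sum_range_succ']
  simp only [pow_zero, Equiv.Perm.one_apply]
  rw [add_comm]
  congr 1

lemma sig_add (k m : ℕ) (x : A) :
    S.sig (k + m) x = S.sig k x + S.sig m ((S.toPerm ^ k) x) := by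
  induction m with
  | zero => simp [sig_zero]
  | succ m ih =>
      rw [← add_assoc, sig_succ, ih, sig_succ, add_assoc]
      congr 2
      rw [pow_apply_mul_pow_apply]

lemma pow_apply_one (k : ℕ) : (S.toPerm ^ k) (1 : A) = 1 := by
  induction k with
  | zero => simp
  | succ k ih => rw [pow_succ, Equiv.Perm.mul_apply, S.map_one', ih]

lemma pow_eq_of_modEq {k m : ℕ} (h : k ≡ m [MOD orderOf S.toPerm]) :
    S.toPerm ^ k = S.toPerm ^ m := pow_eq_pow_iff_modEq.mpr h

/-- Lemma A: iterated skew identity. -/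
lemma pow_mul_apply (k : ℕ) (x y : A) :
    (S.toPerm ^ k) (x * y) = (S.toPerm ^ k) x * (S.toPerm ^ S.sig k x) y := by
  induction k with
  | zero => simp [sig_zero]
  | succ k ih =>
      rw [pow_succ', Equiv.Perm.mul_apply, Equiv.Perm.mul_apply, ih, S.skew]
      congr 1
      rw [pow_apply_mul_pow_apply, sig_succ]

/-- Lemma B: `φ^{π(xy)} = φ^{σ_{π(x)}(y)}`. -/
lemma pow_pi_mul (x y : A) :
    S.toPerm ^ S.pi (x * y) = S.toPerm ^ S.sig (S.pi x) y := by
  ext z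
  have key : S.toPerm x * (S.toPerm ^ S.pi x) y * (S.toPerm ^ S.pi (x * y)) z =
      S.toPerm x * (S.toPerm ^ S.pi x) y * (S.toPerm ^ S.sig (S.pi x) y) z := by
    rw [← S.skew x y, ← S.skew (x * y) z, mul_assoc x y z, S.skew x (y * z),
      S.pow_mul_apply, S.skew x y, mul_assoc]
  exact mul_left_cancel key

lemma pi_mul_modEq (x y : A) :
    S.pi (x * y) ≡ S.sig (S.pi x) y [MOD orderOf S.toPerm] :=
  pow_eq_pow_iff_modEq.mp (S.pow_pi_mul x y)

lemma pi_one_modEq : S.pi (1 : A) ≡ 1 [MOD orderOf S.toPerm] := by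
  have h : S.toPerm ^ S.pi (1 : A) = S.toPerm ^ 1 := by
    ext y
    have := S.skew 1 y
    rw [one_mul, S.map_one', one_mul] at this
    rw [pow_one, ← this]
  exact pow_eq_pow_iff_modEq.mp h

lemma sig_orderOf_modEq (x : A) :
    S.sig (orderOf S.toPerm) x ≡ 0 [MOD orderOf S.toPerm] := by
  have h : S.toPerm ^ S.sig (orderOf S.toPerm) x = S.toPerm ^ 0 := by
    ext z
    have := S.pow_mul_apply (orderOf S.toPerm) x z
    rw [pow_orderOf_eq_one] at this
    simp only [Equiv.Perm.coe_one, id_eq] at this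
    have := mul_left_cancel this.symm
    rw [this, pow_zero]
    rfl
  exact pow_eq_pow_iff_modEq.mp h

lemma sig_modEq_of_modEq {k m : ℕ} (h : k ≡ m [MOD orderOf S.toPerm]) (x : A) :
    S.sig k x ≡ S.sig m x [MOD orderOf S.toPerm] := by
  set n := orderOf S.toPerm with hn
  have aux : ∀ t k : ℕ, S.sig (k + n * t) x ≡ S.sig k x [MOD n] := by
    intro t
    induction t with
    | zero => simp [Nat.ModEq.refl]
    | succ t ih =>
        intro k
        have : k + n * (t + 1) = (k + n * t) + n := by ring
        rw [this, sig_add]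
        calc S.sig (k + n * t) x + S.sig n ((S.toPerm ^ (k + n * t)) x)
            ≡ S.sig k x + 0 [MOD n] := (ih k).add (S.sig_orderOf_modEq _)
          _ = S.sig k x := by rw [add_zero]
  rcases le_total k m with hkm | hkm
  · obtain ⟨t, ht⟩ := (Nat.modEq_iff_dvd' hkm).mp h
    have : m = k + n * t := by omega
    rw [this]
    exact (aux t k).symm
  · obtain ⟨t, ht⟩ := (Nat.modEq_iff_dvd' hkm).mp h.symm
    have : k = m + n * t := by omega
    rw [this]
    exact aux t m

lemma sum_const_modEq {n c : ℕ} {f : ℕ → ℕ} (h : ∀ i, f i ≡ c [MOD n]) (k : ℕ) :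
    ∑ i ∈ Finset.range k, f i ≡ k * c [MOD n] := by
  induction k with
  | zero => simp [Nat.ModEq.refl]
  | succ k ih =>
      rw [Finset.sum_range_succ, Nat.succ_mul]
      exact ih.add (h k)

/-- Membership in the core: all `φ`-iterates lie in the kernel. -/
lemma mem_core_iff (a : A) :
    a ∈ S.core ↔ ∀ j : ℕ, S.pi ((S.toPerm ^ j) a) ≡ 1 [MOD orderOf S.toPerm] := by
  have hn : 0 < orderOf S.toPerm := orderOf_pos S.toPerm
  set n := orderOf S.toPerm with hdef
  constructor
  · intro h j
    rw [core, Set.mem_iInter₂] at h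
    have hr : j % n < n := Nat.mod_lt _ hn
    have hi : n - j % n ∈ Finset.Icc 1 n := by
      rw [Finset.mem_Icc]; omega
    obtain ⟨b, hb, hba⟩ := h _ hi
    have hb' : (S.toPerm ^ j) a = b := by
      have h1 : (S.toPerm ^ j) a = (S.toPerm ^ (j % n)) a := by
        rw [S.pow_eq_of_modEq (Nat.mod_modEq j n).symm]
      rw [h1, ← hba, pow_apply_mul_pow_apply]
      have : n - j % n + j % n = n := by omega
      rw [this, hdef, pow_orderOf_eq_one]
      rfl
    rw [hb']
    exact hb
  · intro h
    rw [core, Set.mem_iInter₂]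
    intro i hi
    rw [Finset.mem_Icc] at hi
    refine ⟨(S.toPerm ^ (n - i)) a, h (n - i), ?_⟩
    rw [pow_apply_mul_pow_apply]
    have : n - i + i = n := by omega
    rw [this, hdef, pow_orderOf_eq_one]
    rfl

/-- auxiliary predicate: all iterates have power ≡ 1. -/
def C (a : A) : Prop := ∀ j : ℕ, S.pi ((S.toPerm ^ j) a) ≡ 1 [MOD orderOf S.toPerm]

lemma mem_core_iff_C (a : A) : a ∈ S.core ↔ S.C a := S.mem_core_iff a

lemma sig_modEq_of_C {a : A} (ha : S.C a) (k : ℕ) :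
    S.sig k a ≡ k [MOD orderOf S.toPerm] := by
  have := sum_const_modEq (n := orderOf S.toPerm) (c := 1)
    (f := fun i => S.pi ((S.toPerm ^ i) a)) ha k
  simpa [sig] using this

lemma pi_mul_right_modEq {a : A} (ha : S.C a) (y : A) :
    S.pi (y * a) ≡ S.pi y [MOD orderOf S.toPerm] := by
  calc S.pi (y * a) ≡ S.sig (S.pi y) a [MOD orderOf S.toPerm] := S.pi_mul_modEq y a
    _ ≡ S.pi y [MOD orderOf S.toPerm] := S.sig_modEq_of_C ha (S.pi y)

lemma pi_mul_left_modEq {a : A} (ha : S.C a) (y : A) :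
    S.pi (a * y) ≡ S.pi y [MOD orderOf S.toPerm] := by
  have h0 : S.pi a ≡ 1 [MOD orderOf S.toPerm] := by simpa using ha 0
  calc S.pi (a * y) ≡ S.sig (S.pi a) y [MOD orderOf S.toPerm] := S.pi_mul_modEq a y
    _ ≡ S.sig 1 y [MOD orderOf S.toPerm] := S.sig_modEq_of_modEq h0 y
    _ = S.pi y := by simp [sig]

lemma C_pow_apply {a : A} (ha : S.C a) (k : ℕ) : S.C ((S.toPerm ^ k) a) := by
  intro j
  rw [pow_apply_mul_pow_apply]
  exact ha (k + j)

lemma C_one : S.C (1 : A) := by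
  intro j
  rw [S.pow_apply_one]
  exact S.pi_one_modEq

lemma C_mul {a b : A} (ha : S.C a) (hb : S.C b) : S.C (a * b) := by
  intro j
  rw [S.pow_mul_apply]
  calc S.pi ((S.toPerm ^ j) a * (S.toPerm ^ S.sig j a) b)
      ≡ S.pi ((S.toPerm ^ j) a) [MOD orderOf S.toPerm] :=
        S.pi_mul_right_modEq (S.C_pow_apply hb _) _
    _ ≡ 1 [MOD orderOf S.toPerm] := ha j

lemma C_inv {a : A} (ha : S.C a) : S.C a⁻¹ := by
  intro j
  have hs : S.toPerm ^ S.sig j a = S.toPerm ^ j := S.pow_eq_of_modEq (S.sig_modEq_of_C ha j)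
  have h1 : (S.toPerm ^ j) a * (S.toPerm ^ j) a⁻¹ = 1 := by
    have := S.pow_mul_apply j a a⁻¹
    rw [mul_inv_cancel, S.pow_apply_one, hs] at this
    exact this.symm
  have h2 : S.pi ((S.toPerm ^ j) a * (S.toPerm ^ j) a⁻¹) ≡ 1 [MOD orderOf S.toPerm] := by
    rw [h1]; exact S.pi_one_modEq
  exact ((S.pi_mul_left_modEq (S.C_pow_apply ha j) _).symm.trans h2)

/-- The unconditional "inverse" lemma: `σ_{σ_k(x)}(x⁻¹) ≡ k`. -/
lemma sig_sig_inv (x : A) (k : ℕ) :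
    S.sig (S.sig k x) x⁻¹ ≡ k [MOD orderOf S.toPerm] := by
  induction k with
  | zero => simp [sig_zero, Nat.ModEq.refl]
  | succ k ih =>
      rw [sig_succ, sig_add]
      have huv : (S.toPerm ^ k) x * (S.toPerm ^ S.sig k x) x⁻¹ = 1 := by
        have := S.pow_mul_apply k x x⁻¹
        rw [mul_inv_cancel, S.pow_apply_one] at this
        exact this.symm
      have h1 : S.pi ((S.toPerm ^ k) x * (S.toPerm ^ S.sig k x) x⁻¹) ≡ 1
          [MOD orderOf S.toPerm] := by
        rw [huv]; exact S.pi_one_modEq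
      have h2 : S.sig (S.pi ((S.toPerm ^ k) x)) ((S.toPerm ^ S.sig k x) x⁻¹) ≡ 1
          [MOD orderOf S.toPerm] :=
        (S.pi_mul_modEq _ _).symm.trans h1
      exact ih.add h2

end SkewMorphism

namespace SkewMorphism

set_option linter.unusedSectionVars false

variable {A : Type*} [Group A] [Fintype A] (S : SkewMorphism A)

lemma sig_modEq_mul_of_P {x : A}
    (hP : ∀ k : ℕ, S.pi ((S.toPerm ^ k) x) ≡ S.pi x [MOD orderOf S.toPerm]) (k : ℕ) :
    S.sig k x ≡ k * S.pi x [MOD orderOf S.toPerm] := by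
  simpa [sig] using sum_const_modEq (n := orderOf S.toPerm) (c := S.pi x)
    (f := fun i => S.pi ((S.toPerm ^ i) x)) hP k

/-- (i) → (ii). -/
lemma C_left_imp_P {x : A} (ha : S.C (S.toPerm x * x⁻¹)) :
    ∀ k : ℕ, S.pi ((S.toPerm ^ k) x) ≡ S.pi x [MOD orderOf S.toPerm] := by
  intro k
  induction k with
  | zero => simp [Nat.ModEq.refl]
  | succ k ih =>
      have hax : (S.toPerm x * x⁻¹) * x = S.toPerm x := by
        rw [inv_mul_cancel_right]
      have h1 : (S.toPerm ^ (k + 1)) x =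
          (S.toPerm ^ k) (S.toPerm x * x⁻¹) * (S.toPerm ^ k) x := by
        rw [pow_succ, Equiv.Perm.mul_apply]
        conv_lhs => rw [← hax]
        rw [S.pow_mul_apply, S.pow_eq_of_modEq (S.sig_modEq_of_C ha k)]
      rw [h1]
      exact (S.pi_mul_left_modEq (S.C_pow_apply ha k) _).trans ih

/-- (ii) → (i). -/
lemma P_imp_C_left {x : A}
    (hP : ∀ k : ℕ, S.pi ((S.toPerm ^ k) x) ≡ S.pi x [MOD orderOf S.toPerm]) :
    S.C (S.toPerm x * x⁻¹) := by
  intro j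
  set n := orderOf S.toPerm with hn
  set p := S.pi x with hp
  set s := S.sig j (S.toPerm x) with hs
  have hS : ∀ k, S.sig k x ≡ k * p [MOD n] := S.sig_modEq_mul_of_P hP
  have hexact : S.sig (j + 1) x = p + s := S.sig_succ' j x
  have hs_mod : s ≡ j * p [MOD n] := by
    have h1 : p + s ≡ p + j * p [MOD n] := by
      rw [← hexact]
      calc S.sig (j + 1) x ≡ (j + 1) * p [MOD n] := hS (j + 1)
        _ = p + j * p := by ring
    exact (Nat.ModEq.refl p).add_left_cancel h1
  have h1 : (S.toPerm ^ j) (S.toPerm x * x⁻¹)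
      = (S.toPerm ^ (j + 1)) x * (S.toPerm ^ s) x⁻¹ := by
    rw [S.pow_mul_apply]
    congr 1
  set m := S.pi ((S.toPerm ^ (j + 1)) x) with hm
  have h2 : S.pi ((S.toPerm ^ j) (S.toPerm x * x⁻¹))
      ≡ S.sig m ((S.toPerm ^ s) x⁻¹) [MOD n] := by
    rw [h1]; exact S.pi_mul_modEq _ _
  have h3 : S.sig s x⁻¹ + S.sig m ((S.toPerm ^ s) x⁻¹) = S.sig (s + m) x⁻¹ :=
    (S.sig_add s m x⁻¹).symm
  have hTs : S.sig s x⁻¹ ≡ j [MOD n] := by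
    have hsx : s ≡ S.sig j x [MOD n] := hs_mod.trans (hS j).symm
    exact (S.sig_modEq_of_modEq hsx x⁻¹).trans (S.sig_sig_inv x j)
  have hTsm : S.sig (s + m) x⁻¹ ≡ j + 1 [MOD n] := by
    have hsm : s + m ≡ S.sig (j + 1) x [MOD n] := by
      calc s + m ≡ j * p + p [MOD n] := hs_mod.add (hP (j + 1))
        _ = (j + 1) * p := by ring
        _ ≡ S.sig (j + 1) x [MOD n] := (hS (j + 1)).symm
    exact (S.sig_modEq_of_modEq hsm x⁻¹).trans (S.sig_sig_inv x (j + 1))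
  have h4 : S.pi ((S.toPerm ^ j) (S.toPerm x * x⁻¹)) + j ≡ j + 1 [MOD n] := by
    calc S.pi ((S.toPerm ^ j) (S.toPerm x * x⁻¹)) + j
        ≡ S.sig m ((S.toPerm ^ s) x⁻¹) + S.sig s x⁻¹ [MOD n] := h2.add hTs.symm
      _ = S.sig (s + m) x⁻¹ := by rw [add_comm, h3]
      _ ≡ j + 1 [MOD n] := hTsm
  rw [Nat.add_comm j 1] at h4
  exact Nat.ModEq.add_right_cancel' j h4

/-- (ii) → membership of `x⁻¹ φ(x)` in the core. -/
lemma P_imp_C_right {x : A}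
    (hP : ∀ k : ℕ, S.pi ((S.toPerm ^ k) x) ≡ S.pi x [MOD orderOf S.toPerm]) :
    S.C (x⁻¹ * S.toPerm x) := by
  intro j
  set n := orderOf S.toPerm with hn
  set p := S.pi x with hp
  have hS : ∀ k, S.sig k x ≡ k * p [MOD n] := S.sig_modEq_mul_of_P hP
  have hTp : ∀ k, S.sig k x⁻¹ * p ≡ k [MOD n] := by
    intro k
    have h1 : S.sig (S.sig k x⁻¹) x ≡ k [MOD n] := by
      have h := S.sig_sig_inv x⁻¹ k
      rwa [inv_inv] at h
    exact (hS (S.sig k x⁻¹)).symm.trans h1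
  set T := S.sig j x⁻¹ with hT
  set τ := S.pi ((S.toPerm ^ j) x⁻¹) with hτ
  have hτp : τ * p ≡ 1 [MOD n] := by
    have hT1 : S.sig (j + 1) x⁻¹ = T + τ := S.sig_succ j x⁻¹
    have h1 : (T + τ) * p ≡ j + 1 [MOD n] := by rw [← hT1]; exact hTp (j + 1)
    have h2 : T * p + τ * p ≡ j + 1 [MOD n] := by rw [← add_mul]; exact h1
    have h3 : j + τ * p ≡ j + 1 [MOD n] := ((hTp j).symm.add_right _).trans h2
    exact (Nat.ModEq.refl j).add_left_cancel h3
  have h1 : (S.toPerm ^ j) (x⁻¹ * S.toPerm x)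
      = (S.toPerm ^ j) x⁻¹ * (S.toPerm ^ (T + 1)) x := by
    rw [S.pow_mul_apply]
    congr 1
  have h2 : S.pi ((S.toPerm ^ j) (x⁻¹ * S.toPerm x))
      ≡ S.sig τ ((S.toPerm ^ (T + 1)) x) [MOD n] := by
    rw [h1]; exact S.pi_mul_modEq _ _
  have h3 : S.sig τ ((S.toPerm ^ (T + 1)) x) ≡ τ * p [MOD n] := by
    have hterm : ∀ i : ℕ, S.pi ((S.toPerm ^ i) ((S.toPerm ^ (T + 1)) x)) ≡ p [MOD n] := by
      intro i
      rw [pow_apply_mul_pow_apply]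
      exact hP _
    simpa [sig] using sum_const_modEq (n := n) (c := p) hterm τ
  exact (h2.trans h3).trans hτp

/-- coset equality → (ii). -/
lemma img_imp_P {x : A}
    (himg : (S.toPerm x * ·) '' S.core = (x * ·) '' S.core) :
    ∀ k : ℕ, S.pi ((S.toPerm ^ k) x) ≡ S.pi x [MOD orderOf S.toPerm] := by
  have h1 : S.toPerm x ∈ (x * ·) '' S.core := by
    rw [← himg]
    exact ⟨1, (S.mem_core_iff_C 1).mpr S.C_one, mul_one _⟩
  obtain ⟨c, hc, hxc⟩ := h1
  have hc' : S.C c := (S.mem_core_iff_C c).mp hc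
  intro k
  induction k with
  | zero => simp [Nat.ModEq.refl]
  | succ k ih =>
      have h2 : (S.toPerm ^ (k + 1)) x = (S.toPerm ^ k) x * (S.toPerm ^ S.sig k x) c := by
        rw [pow_succ, Equiv.Perm.mul_apply, ← hxc, S.pow_mul_apply]
      rw [h2]
      exact (S.pi_mul_right_modEq (S.C_pow_apply hc' _) _).trans ih

end SkewMorphism

theorem smooth_element_characterizations {A : Type*} [Group A] [Fintype A]
    (S : SkewMorphism A) (x : A) :
    (S.toPerm x * x⁻¹ ∈ S.core ↔
      ∀ i : ℕ, S.pi ((S.toPerm ^ i) x) ≡ S.pi x [MOD orderOf S.toPerm]) ∧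
    (S.toPerm x * x⁻¹ ∈ S.core ↔
      (S.toPerm x * ·) '' S.core = (x * ·) '' S.core) := by
  constructor
  · constructor
    · intro h
      exact S.C_left_imp_P ((S.mem_core_iff_C _).mp h)
    · intro hP
      exact (S.mem_core_iff_C _).mpr (S.P_imp_C_left hP)
  · constructor
    · intro h
      have hP := S.C_left_imp_P ((S.mem_core_iff_C _).mp h)
      have ha' : S.C (x⁻¹ * S.toPerm x) := S.P_imp_C_right hP
      ext y
      simp only [Set.mem_image]
      constructor
      · rintro ⟨c, hc, rfl⟩
        refine ⟨(x⁻¹ * S.toPerm x) * c, ?_, ?_⟩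
        · exact (S.mem_core_iff_C _).mpr
            (S.C_mul ha' ((S.mem_core_iff_C _).mp hc))
        · simp [mul_assoc]
      · rintro ⟨c, hc, rfl⟩
        refine ⟨(x⁻¹ * S.toPerm x)⁻¹ * c, ?_, ?_⟩
        · exact (S.mem_core_iff_C _).mpr
            (S.C_mul (S.C_inv ha') ((S.mem_core_iff_C _).mp hc))
        · simp [mul_assoc]
    · intro himg
      exact (S.mem_core_iff_C _).mpr (S.P_imp_C_left (S.img_imp_P himg))
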